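/- For b > 1/2, a > 1/4, and any ξ₁, τ₁ ∈ ℝ, the quantity J := (1+|τ₁ - ξ₁²/2|)^{-2b} ∫_ℝ dτ ∫_ℝ dξ (1+|τ|)^{-2a}(1+|τ - τ₁ + (ξ-ξ₁)²/2|)^{-2b} is bounded by a constant independent of (ξ₁,τ₁). -/
import Mathlib

open MeasureTheory Real

private lemma base_integrable {p : ℝ} (hp : 1 < p) :
    Integrable (fun x : ℝ => (1 + |x|) ^ (-p)) := by
  have := integrable_one_add_norm (E := ℝ) (μ := volume) (r := p) (by simpa using hp)
  simpa [Real.norm_eq_abs] using this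

private lemma rpow_neg_anti {x y p : ℝ} (hx : 0 < x) (hxy : x ≤ y) (hp : 0 ≤ p) :
    y ^ (-p) ≤ x ^ (-p) :=
  Real.rpow_le_rpow_of_nonpos hx hxy (neg_nonpos.2 hp)

private lemma rpow_neg_two_mul {x : ℝ} (b : ℝ) (hx : 0 ≤ x) :
    x ^ (-(2*b)) = (x ^ 2) ^ (-b) := by
  rw [show -(2*b) = (2:ℝ) * (-b) by ring, Real.rpow_mul hx, show ((2:ℝ)) = ((2:ℕ):ℝ) by norm_num,
    Real.rpow_natCast]

private lemma rpow_neg_le_of_le {A B M p : ℝ} (hA : 0 < A) (hB : 0 < B) (hM : 0 < M)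
    (h : B ≤ M * A) (hp : 0 ≤ p) : A ^ (-p) ≤ M ^ p * B ^ (-p) := by
  have h1 : B / M ≤ A := (div_le_iff₀' hM).2 h
  calc A ^ (-p) ≤ (B / M) ^ (-p) := rpow_neg_anti (by positivity) h1 hp
    _ = M ^ p * B ^ (-p) := by
        rw [Real.div_rpow hB.le hM.le, Real.rpow_neg hM.le, division_def, inv_inv, mul_comm]

private lemma conv_pt {p h u v : ℝ} (hp : 0 ≤ p) (hh : 0 ≤ h) (hu : 1 ≤ u) (hv : 1 ≤ v) :
    u ^ (-p) * v ^ (-h) ≤ u ^ (-(p+h)) + v ^ (-(p+h)) := by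
  have hu0 : (0:ℝ) < u := by linarith
  have hv0 : (0:ℝ) < v := by linarith
  rcases le_total u v with huv | huv
  · have h1 : v ^ (-h) ≤ u ^ (-h) := rpow_neg_anti hu0 huv hh
    have h2 : u ^ (-p) * v ^ (-h) ≤ u ^ (-p) * u ^ (-h) :=
      mul_le_mul_of_nonneg_left h1 (Real.rpow_nonneg hu0.le _)
    have h3 : u ^ (-p) * u ^ (-h) = u ^ (-(p+h)) := by
      rw [show -(p+h) = -p + -h by ring, Real.rpow_add hu0]
    exact (h2.trans_eq h3).trans (le_add_of_nonneg_right (Real.rpow_nonneg hv0.le _))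
  · have h1 : u ^ (-p) ≤ v ^ (-p) := rpow_neg_anti hv0 huv hp
    have h2 : u ^ (-p) * v ^ (-h) ≤ v ^ (-p) * v ^ (-h) :=
      mul_le_mul_of_nonneg_right h1 (Real.rpow_nonneg hv0.le _)
    have h3 : v ^ (-p) * v ^ (-h) = v ^ (-(p+h)) := by
      rw [show -(p+h) = -p + -h by ring, Real.rpow_add hv0]
    exact (h2.trans_eq h3).trans (le_add_of_nonneg_left (Real.rpow_nonneg hu0.le _))

set_option maxHeartbeats 1600000 in
private lemma inner_bound {b : ℝ} (hb : 1/2 < b) :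
    ∃ K : ℝ, 0 ≤ K ∧ ∀ c : ℝ,
      (∫ s : ℝ, (1 + |c + s ^ 2 / 2|) ^ (-(2*b))) ≤ K * (1 + |c|) ^ (-(1/2 : ℝ)) := by
  have hb0 : (0:ℝ) < b := by linarith
  have h2b : (1:ℝ) < 2*b := by linarith
  have hbase : Integrable (fun x : ℝ => (1 + |x|) ^ (-(2*b))) := base_integrable h2b
  set Kb : ℝ := ∫ u : ℝ, (1 + |u|) ^ (-(2*b)) with hKbdef
  have hKb0 : 0 ≤ Kb := integral_nonneg fun u => Real.rpow_nonneg (by positivity) _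
  clear_value Kb
  have h4b : (0:ℝ) ≤ 4 ^ b := Real.rpow_nonneg (by norm_num) b
  have h8b : (0:ℝ) ≤ 8 ^ b := Real.rpow_nonneg (by norm_num) b
  refine ⟨4 ^ b * Kb + 2 * 8 ^ b * Kb + 4 * Kb, by positivity, fun c => ?_⟩
  have hcpow0 : (0:ℝ) ≤ (1 + |c|) ^ (-(1/2 : ℝ)) := Real.rpow_nonneg (by positivity) _
  have hnn : (0 : ℝ → ℝ) ≤ᵐ[volume] fun s : ℝ => (1 + |c + s ^ 2 / 2|) ^ (-(2*b)) :=
    Filter.Eventually.of_forall fun s => by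
      simp only [Pi.zero_apply]; positivity
  rcases le_or_gt 0 c with hc | hc
  · -- case c ≥ 0
    have hint : ∀ s : ℝ, (1 + |c + s ^ 2 / 2|) ^ (-(2*b))
        ≤ ((1 + |c|) ^ (-(1/2:ℝ)) * 4 ^ b) * (1 + |s|) ^ (-(2*b)) := by
      intro s
      have habs : |c + s ^ 2 / 2| = c + s ^ 2 / 2 := abs_of_nonneg (by positivity)
      have hX : (0:ℝ) < 1 + (c + s ^ 2 / 2) := by positivity
      have e1 : (1 + |c + s ^ 2 / 2|) ^ (-(2*b)) = ((1 + (c + s ^ 2 / 2)) ^ 2) ^ (-b) := by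
        rw [habs, rpow_neg_two_mul b hX.le]
      have e2 : ((1 + (c + s ^ 2 / 2)) ^ 2) ^ (-b)
          ≤ ((1 + c) * (1 + s ^ 2 / 2)) ^ (-b) := by
        apply rpow_neg_anti (by positivity) (by nlinarith [sq_nonneg s, sq_nonneg (c + s^2/2)])
          hb0.le
      have e3 : ((1 + c) * (1 + s ^ 2 / 2)) ^ (-b)
          = (1 + c) ^ (-b) * (1 + s ^ 2 / 2) ^ (-b) :=
        Real.mul_rpow (by positivity) (by positivity)
      have e4 : (1 + c) ^ (-b) ≤ (1 + c) ^ (-(1/2:ℝ)) :=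
        Real.rpow_le_rpow_of_exponent_le (by linarith) (by linarith)
      have e5 : (1 + s ^ 2 / 2) ^ (-b) ≤ 4 ^ b * ((1 + |s|) ^ 2) ^ (-b) := by
        apply rpow_neg_le_of_le (by positivity) (by positivity) (by norm_num)
          (by nlinarith [abs_nonneg s, sq_abs s, sq_nonneg (|s| - 1)]) hb0.le
      have e6 : ((1 + |s|) ^ 2) ^ (-b) = (1 + |s|) ^ (-(2*b)) :=
        (rpow_neg_two_mul b (by positivity)).symm
      have hcc : |c| = c := abs_of_nonneg hc
      calc (1 + |c + s ^ 2 / 2|) ^ (-(2*b))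
          ≤ (1 + c) ^ (-b) * (1 + s ^ 2 / 2) ^ (-b) := by rw [e1]; exact e2.trans_eq e3
        _ ≤ (1 + c) ^ (-(1/2:ℝ)) * (4 ^ b * ((1 + |s|) ^ 2) ^ (-b)) := by
            apply mul_le_mul e4 e5 (Real.rpow_nonneg (by positivity) _)
              (Real.rpow_nonneg (by positivity) _)
        _ = ((1 + |c|) ^ (-(1/2:ℝ)) * 4 ^ b) * (1 + |s|) ^ (-(2*b)) := by
            rw [e6, hcc]; ring
    have hdom : Integrable
        (fun s : ℝ => ((1 + |c|) ^ (-(1/2:ℝ)) * 4 ^ b) * (1 + |s|) ^ (-(2*b))) :=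
      hbase.const_mul _
    have hle := integral_mono_of_nonneg hnn hdom (Filter.Eventually.of_forall hint)
    rw [integral_const_mul, ← hKbdef] at hle
    calc (∫ s : ℝ, (1 + |c + s ^ 2 / 2|) ^ (-(2*b)))
        ≤ ((1 + |c|) ^ (-(1/2:ℝ)) * 4 ^ b) * Kb := hle
      _ ≤ (4 ^ b * Kb + 2 * 8 ^ b * Kb + 4 * Kb) * (1 + |c|) ^ (-(1/2:ℝ)) := by
          nlinarith [mul_nonneg (mul_nonneg h8b hKb0) hcpow0, mul_nonneg hKb0 hcpow0]
  · rcases le_or_gt (-1) c with hc1 | hc1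
    · -- case -1 ≤ c < 0
      have hint : ∀ s : ℝ, (1 + |c + s ^ 2 / 2|) ^ (-(2*b))
          ≤ 8 ^ b * (1 + |s|) ^ (-(2*b)) := by
        intro s
        have hA : (0:ℝ) < 1 + |c + s ^ 2 / 2| := by positivity
        have hB : (0:ℝ) < 1 + |s| := by positivity
        have hsq : (1 + |s|) ^ 2 ≤ 8 * (1 + |c + s ^ 2 / 2|) := by
          nlinarith [abs_nonneg (c + s^2/2), le_abs_self (c + s^2/2), abs_nonneg s, sq_abs s,
            sq_nonneg (|s| - 1/2)]
        have hsq2 : (1 + |s|) ^ 2 ≤ 8 * (1 + |c + s ^ 2 / 2|) ^ 2 := by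
          nlinarith [hsq, abs_nonneg (c + s^2/2), sq_abs (c + s^2/2), sq_nonneg (c + s^2/2)]
        have e1 : (1 + |c + s ^ 2 / 2|) ^ (-(2*b)) = ((1 + |c + s ^ 2 / 2|) ^ 2) ^ (-b) :=
          rpow_neg_two_mul b hA.le
        have e2 : ((1 + |c + s ^ 2 / 2|) ^ 2) ^ (-b) ≤ 8 ^ b * ((1 + |s|) ^ 2) ^ (-b) :=
          rpow_neg_le_of_le (by positivity) (by positivity) (by norm_num) hsq2 hb0.le
        have e3 : ((1 + |s|) ^ 2) ^ (-b) = (1 + |s|) ^ (-(2*b)) :=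
          (rpow_neg_two_mul b hB.le).symm
        rw [e1, ← e3]; exact e2
      have hdom : Integrable (fun s : ℝ => 8 ^ b * (1 + |s|) ^ (-(2*b))) := hbase.const_mul _
      have hle := integral_mono_of_nonneg hnn hdom (Filter.Eventually.of_forall hint)
      rw [integral_const_mul, ← hKbdef] at hle
      have hhalf : (1/2 : ℝ) ≤ (1 + |c|) ^ (-(1/2:ℝ)) := by
        have h1 : (1 + |c|) ≤ 2 := by
          have : |c| ≤ 1 := abs_le.2 ⟨hc1, by linarith⟩
          linarith
        have h2 : (2:ℝ) ^ (-(1/2:ℝ)) ≤ (1 + |c|) ^ (-(1/2:ℝ)) :=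
          rpow_neg_anti (by positivity) h1 (by norm_num)
        have h3 : (2:ℝ) ^ (-(1/2:ℝ)) = (Real.sqrt 2)⁻¹ := by
          rw [Real.rpow_neg (by norm_num), Real.sqrt_eq_rpow]
        have h4 : Real.sqrt 2 ≤ 2 := by
          nlinarith [Real.sq_sqrt (by norm_num : (0:ℝ) ≤ 2), Real.sqrt_nonneg 2]
        have h5 : (1/2 : ℝ) ≤ (Real.sqrt 2)⁻¹ := by
          rw [show (1/2 : ℝ) = (2:ℝ)⁻¹ by norm_num]
          exact inv_anti₀ (Real.sqrt_pos.2 (by norm_num)) h4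
        linarith [h3 ▸ h2]
      calc (∫ s : ℝ, (1 + |c + s ^ 2 / 2|) ^ (-(2*b))) ≤ 8 ^ b * Kb := hle
        _ ≤ (4 ^ b * Kb + 2 * 8 ^ b * Kb + 4 * Kb) * (1 + |c|) ^ (-(1/2:ℝ)) := by
            nlinarith [mul_le_mul_of_nonneg_left hhalf
                (by positivity : (0:ℝ) ≤ 2 * 8 ^ b * Kb),
              mul_nonneg (mul_nonneg h4b hKb0) hcpow0, mul_nonneg hKb0 hcpow0]
    · -- case c < -1
      obtain ⟨m, hcm, hm1⟩ : ∃ m : ℝ, c = -m ∧ 1 < m := ⟨-c, by ring, by linarith⟩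
      have hm0 : (0:ℝ) < m := by linarith
      obtain ⟨q, hq0, hq2⟩ : ∃ q : ℝ, 0 < q ∧ q ^ 2 = 2*m :=
        ⟨Real.sqrt (2*m), Real.sqrt_pos.2 (by linarith), Real.sq_sqrt (by linarith)⟩
      have hpt : ∀ s : ℝ, (1 + |c + s ^ 2 / 2|) ^ (-(2*b)) ≤
          (1 + |q/2 * s - q^2/2|) ^ (-(2*b)) + (1 + |q/2 * s + q^2/2|) ^ (-(2*b)) := by
        intro s
        rcases le_or_gt 0 s with hs | hs
        · have key : |q/2 * s - q^2/2| ≤ |c + s ^ 2 / 2| := by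
            have e : c + s ^ 2 / 2 = (s - q) * (s + q) / 2 := by
              rw [hcm]; linear_combination hq2 / 2
            have e2 : |q/2 * s - q^2/2| = q/2 * |s - q| := by
              rw [show q/2 * s - q^2/2 = (q/2) * (s - q) by ring, abs_mul,
                abs_of_pos (by linarith : (0:ℝ) < q/2)]
            rw [e, e2, abs_div, abs_mul, abs_of_nonneg (by linarith : (0:ℝ) ≤ s + q)]
            rw [show |(2:ℝ)| = 2 by norm_num]
            have h5 : q * |s - q| ≤ (s + q) * |s - q| :=
              mul_le_mul_of_nonneg_right (by linarith) (abs_nonneg _)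
            linarith [h5, mul_comm (|s - q|) (s + q)]
          have h1 : (1 + |c + s ^ 2 / 2|) ^ (-(2*b))
              ≤ (1 + |q/2 * s - q^2/2|) ^ (-(2*b)) :=
            rpow_neg_anti (by positivity) (by linarith) (by linarith)
          exact h1.trans (le_add_of_nonneg_right (Real.rpow_nonneg (by positivity) _))
        · have key : |q/2 * s + q^2/2| ≤ |c + s ^ 2 / 2| := by
            have e : c + s ^ 2 / 2 = (s + q) * (s - q) / 2 := by
              rw [hcm]; linear_combination hq2 / 2
            have e2 : |q/2 * s + q^2/2| = q/2 * |s + q| := by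
              rw [show q/2 * s + q^2/2 = (q/2) * (s + q) by ring, abs_mul,
                abs_of_pos (by linarith : (0:ℝ) < q/2)]
            rw [e, e2, abs_div, abs_mul]
            rw [show |(2:ℝ)| = 2 by norm_num]
            have hsq' : |s - q| = q - s := by
              rw [abs_of_nonpos (by linarith)]; ring
            rw [hsq']
            have h5 : q * |s + q| ≤ (q - s) * |s + q| :=
              mul_le_mul_of_nonneg_right (by linarith) (abs_nonneg _)
            linarith [h5, mul_comm (|s + q|) (q - s)]
          have h1 : (1 + |c + s ^ 2 / 2|) ^ (-(2*b))
              ≤ (1 + |q/2 * s + q^2/2|) ^ (-(2*b)) :=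
            rpow_neg_anti (by positivity) (by linarith) (by linarith)
          exact h1.trans (le_add_of_nonneg_left (Real.rpow_nonneg (by positivity) _))
      have hint1 : Integrable (fun s : ℝ => (1 + |q/2 * s - q^2/2|) ^ (-(2*b))) := by
        have h0 : Integrable (fun x : ℝ => (1 + |x - q^2/2|) ^ (-(2*b))) :=
          hbase.comp_sub_right _
        exact h0.comp_mul_left' (ne_of_gt (by linarith : (0:ℝ) < q/2))
      have hint2 : Integrable (fun s : ℝ => (1 + |q/2 * s + q^2/2|) ^ (-(2*b))) := by
        have h0 : Integrable (fun x : ℝ => (1 + |x + q^2/2|) ^ (-(2*b))) := by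
          have := hbase.comp_sub_right (-(q^2/2))
          simpa [sub_neg_eq_add] using this
        exact h0.comp_mul_left' (ne_of_gt (by linarith : (0:ℝ) < q/2))
      have hI1 : (∫ s : ℝ, (1 + |q/2 * s - q^2/2|) ^ (-(2*b))) = (2/q) * Kb := by
        have h := Measure.integral_comp_mul_left
          (fun x : ℝ => (1 + |x - q^2/2|) ^ (-(2*b))) (q/2)
        simp only [smul_eq_mul] at h
        rw [h, integral_sub_right_eq_self (fun x : ℝ => (1 + |x|) ^ (-(2*b))) (q^2/2),
          abs_of_pos (inv_pos.2 (by linarith : (0:ℝ) < q/2)), inv_div, ← hKbdef]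
      have hI2 : (∫ s : ℝ, (1 + |q/2 * s + q^2/2|) ^ (-(2*b))) = (2/q) * Kb := by
        have h := Measure.integral_comp_mul_left
          (fun x : ℝ => (1 + |x + q^2/2|) ^ (-(2*b))) (q/2)
        simp only [smul_eq_mul] at h
        rw [h, integral_add_right_eq_self (fun x : ℝ => (1 + |x|) ^ (-(2*b))) (q^2/2),
          abs_of_pos (inv_pos.2 (by linarith : (0:ℝ) < q/2)), inv_div, ← hKbdef]
      have hle := integral_mono_of_nonneg hnn (hint1.add hint2)
        (Filter.Eventually.of_forall hpt)
      simp only [Pi.add_apply] at hle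
      rw [integral_add hint1 hint2, hI1, hI2] at hle
      have hcabs : 1 + |c| = 1 + m := by rw [hcm, abs_of_neg (by linarith : -m < 0)]; ring
      have hq_ge : Real.sqrt (1 + m) ≤ q := by
        have h1 : Real.sqrt (1 + m) ≤ Real.sqrt (q ^ 2) :=
          Real.sqrt_le_sqrt (by nlinarith)
        rwa [Real.sqrt_sq hq0.le] at h1
      have hrw : (1 + |c|) ^ (-(1/2:ℝ)) = (Real.sqrt (1+m))⁻¹ := by
        rw [hcabs, Real.rpow_neg (by positivity), Real.sqrt_eq_rpow]
      have hfinal : (2/q) * Kb + (2/q) * Kb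
          ≤ (4 * Kb) * (1 + |c|) ^ (-(1/2:ℝ)) := by
        rw [hrw]
        have hq' : q⁻¹ ≤ (Real.sqrt (1+m))⁻¹ :=
          inv_anti₀ (Real.sqrt_pos.2 (by linarith)) hq_ge
        have : (2/q) * Kb ≤ (2 * Kb) * (Real.sqrt (1+m))⁻¹ := by
          rw [div_eq_mul_inv]
          calc 2 * q⁻¹ * Kb ≤ 2 * (Real.sqrt (1+m))⁻¹ * Kb := by
                apply mul_le_mul_of_nonneg_right _ hKb0
                linarith
            _ = (2 * Kb) * (Real.sqrt (1+m))⁻¹ := by ring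
        linarith
      calc (∫ s : ℝ, (1 + |c + s ^ 2 / 2|) ^ (-(2*b))) ≤ (2/q) * Kb + (2/q) * Kb := hle
        _ ≤ (4 * Kb) * (1 + |c|) ^ (-(1/2:ℝ)) := hfinal
        _ ≤ (4 ^ b * Kb + 2 * 8 ^ b * Kb + 4 * Kb) * (1 + |c|) ^ (-(1/2:ℝ)) := by
            nlinarith [mul_nonneg (mul_nonneg h4b hKb0) hcpow0,
              mul_nonneg (mul_nonneg h8b hKb0) hcpow0]

set_option maxHeartbeats 1600000 in
theorem uniform_modulation_integral (a b : ℝ) (ha : 1 / 4 < a) (hb : 1 / 2 < b) :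
    ∃ C : ℝ, ∀ ξ₁ τ₁ : ℝ,
      (1 + |τ₁ - ξ₁ ^ 2 / 2|) ^ (-(2 * b)) *
        ∫ τ : ℝ, ∫ ξ : ℝ,
          (1 + |τ|) ^ (-(2 * a)) *
            (1 + |τ - τ₁ + (ξ - ξ₁) ^ 2 / 2|) ^ (-(2 * b)) ≤ C := by
  obtain ⟨K, hK0, hKbd⟩ := inner_bound hb
  have hr : (1:ℝ) < 2*a + 1/2 := by linarith
  have hbase : Integrable (fun x : ℝ => (1 + |x|) ^ (-(2*a + 1/2))) := base_integrable hr
  set Ir : ℝ := ∫ u : ℝ, (1 + |u|) ^ (-(2*a + 1/2)) with hIrdef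
  have hIr0 : 0 ≤ Ir := integral_nonneg fun u => Real.rpow_nonneg (by positivity) _
  refine ⟨K * (Ir + Ir), fun ξ₁ τ₁ => ?_⟩
  have hFnn : ∀ τ : ℝ, 0 ≤ ∫ ξ : ℝ,
      (1 + |τ|) ^ (-(2 * a)) * (1 + |τ - τ₁ + (ξ - ξ₁) ^ 2 / 2|) ^ (-(2 * b)) :=
    fun τ => integral_nonneg fun ξ =>
      mul_nonneg (Real.rpow_nonneg (by positivity) _) (Real.rpow_nonneg (by positivity) _)
  have hOuter : (∫ τ : ℝ, ∫ ξ : ℝ,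
      (1 + |τ|) ^ (-(2 * a)) * (1 + |τ - τ₁ + (ξ - ξ₁) ^ 2 / 2|) ^ (-(2 * b)))
      ≤ K * (Ir + Ir) := by
    have hG : Integrable (fun τ : ℝ =>
        K * ((1 + |τ|) ^ (-(2*a + 1/2)) + (1 + |τ - τ₁|) ^ (-(2*a + 1/2)))) :=
      (hbase.add (hbase.comp_sub_right τ₁)).const_mul K
    have hFG : ∀ τ : ℝ, (∫ ξ : ℝ,
        (1 + |τ|) ^ (-(2 * a)) * (1 + |τ - τ₁ + (ξ - ξ₁) ^ 2 / 2|) ^ (-(2 * b)))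
        ≤ K * ((1 + |τ|) ^ (-(2*a + 1/2)) + (1 + |τ - τ₁|) ^ (-(2*a + 1/2))) := by
      intro τ
      have h1 : (∫ ξ : ℝ,
          (1 + |τ|) ^ (-(2 * a)) * (1 + |τ - τ₁ + (ξ - ξ₁) ^ 2 / 2|) ^ (-(2 * b)))
          = (1 + |τ|) ^ (-(2 * a)) *
            ∫ ξ : ℝ, (1 + |τ - τ₁ + (ξ - ξ₁) ^ 2 / 2|) ^ (-(2 * b)) :=
        integral_const_mul _ _
      have h2 : (∫ ξ : ℝ, (1 + |τ - τ₁ + (ξ - ξ₁) ^ 2 / 2|) ^ (-(2 * b)))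
          = ∫ s : ℝ, (1 + |τ - τ₁ + s ^ 2 / 2|) ^ (-(2 * b)) :=
        integral_sub_right_eq_self (fun s : ℝ => (1 + |τ - τ₁ + s ^ 2 / 2|) ^ (-(2 * b))) ξ₁
      have h3 := hKbd (τ - τ₁)
      have key : (1 + |τ|) ^ (-(2 * a)) * (1 + |τ - τ₁|) ^ (-(1/2:ℝ))
          ≤ (1 + |τ|) ^ (-(2*a + 1/2)) + (1 + |τ - τ₁|) ^ (-(2*a + 1/2)) :=
        conv_pt (by linarith) (by norm_num)
          (by linarith [abs_nonneg τ]) (by linarith [abs_nonneg (τ - τ₁)])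
      rw [h1, h2]
      calc (1 + |τ|) ^ (-(2 * a)) * ∫ s : ℝ, (1 + |τ - τ₁ + s ^ 2 / 2|) ^ (-(2 * b))
          ≤ (1 + |τ|) ^ (-(2 * a)) * (K * (1 + |τ - τ₁|) ^ (-(1/2:ℝ))) :=
            mul_le_mul_of_nonneg_left h3 (Real.rpow_nonneg (by positivity) _)
        _ = K * ((1 + |τ|) ^ (-(2 * a)) * (1 + |τ - τ₁|) ^ (-(1/2:ℝ))) := by ring
        _ ≤ K * ((1 + |τ|) ^ (-(2*a + 1/2)) + (1 + |τ - τ₁|) ^ (-(2*a + 1/2))) :=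
            mul_le_mul_of_nonneg_left key hK0
    have hmono := integral_mono_of_nonneg (Filter.Eventually.of_forall hFnn) hG
      (Filter.Eventually.of_forall hFG)
    rw [integral_const_mul, integral_add hbase (hbase.comp_sub_right τ₁),
      integral_sub_right_eq_self (fun u : ℝ => (1 + |u|) ^ (-(2*a + 1/2))) τ₁] at hmono
    exact hmono
  have hP : (1 + |τ₁ - ξ₁ ^ 2 / 2|) ^ (-(2 * b)) ≤ 1 :=
    Real.rpow_le_one_of_one_le_of_nonpos
      (le_add_of_nonneg_right (abs_nonneg _)) (by linarith)
  calc (1 + |τ₁ - ξ₁ ^ 2 / 2|) ^ (-(2 * b)) *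
        ∫ τ : ℝ, ∫ ξ : ℝ,
          (1 + |τ|) ^ (-(2 * a)) * (1 + |τ - τ₁ + (ξ - ξ₁) ^ 2 / 2|) ^ (-(2 * b))
      ≤ 1 * ∫ τ : ℝ, ∫ ξ : ℝ,
          (1 + |τ|) ^ (-(2 * a)) * (1 + |τ - τ₁ + (ξ - ξ₁) ^ 2 / 2|) ^ (-(2 * b)) :=
        mul_le_mul_of_nonneg_right hP (integral_nonneg hFnn)
    _ = ∫ τ : ℝ, ∫ ξ : ℝ,
          (1 + |τ|) ^ (-(2 * a)) * (1 + |τ - τ₁ + (ξ - ξ₁) ^ 2 / 2|) ^ (-(2 * b)) := one_mul _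
    _ ≤ K * (Ir + Ir) := hOuter
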